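/- Let (W_t) be a standard Brownian motion and let Υ_t = Σ_{i=1}^m ζ_{i−1} 1_{(t_{i−1}, t_i]}(t), t ∈ [0,T], be a step process, where 0 = t_0 < t_1 < … < t_m = T and ζ_0, …, ζ_{m−1} are random variables. Then Υ is backward integrable with respect to W in the sense of Russo–Vallois, and its backward integral coincides with the Hänggi–Klimontovich limit: ∫_0^t Υ_s d⁺W_s = lim_{‖Δ_n‖→0} Σ_{j=1}^n Υ_{t_j}(W_{t_j} − W_{t_{j−1}}) in probability, where the limit is over partitions Δ_n of [0,t] with mesh ‖Δ_n‖ tending to 0. -/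

import Mathlib

open MeasureTheory ProbabilityTheory Filter Set
open scoped ENNReal

noncomputable section

/-- A partition `a = t 0 < t 1 < ... < t n = b` of the interval `[a, b]`. -/
structure IntervalPartition (a b : ℝ) where
  n : ℕ
  t : ℕ → ℝ
  n_pos : 0 < n
  mono : ∀ i < n, t i < t (i + 1)
  first : t 0 = a
  last : t n = b

/-- The mesh (diameter) `‖Δ‖ = max_j (t_j - t_{j-1})` of a partition. -/
def IntervalPartition.mesh {a b : ℝ} (π : IntervalPartition a b) : ℝ :=
  Finset.sup' (Finset.range π.n) (Finset.nonempty_range_iff.mpr π.n_pos.ne')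
    (fun i => π.t (i + 1) - π.t i)

/-- Convergence in probability of partition-indexed random variables as the mesh tends to `0`. -/
def TendstoInProbMesh {Ω : Type*} [MeasureSpace Ω] {E : Type*} [NormedAddCommGroup E]
    (a b : ℝ) (S : IntervalPartition a b → Ω → E) (L : Ω → E) : Prop :=
  ∀ ε > (0 : ℝ), ∀ δ > (0 : ℝ), ∃ η > (0 : ℝ), ∀ π : IntervalPartition a b,
    π.mesh < η → ℙ {ω | ε ≤ ‖S π ω - L ω‖} < ENNReal.ofReal δ

/-- Right-endpoint Riemann sum `Σ_j Y_{t_j} (X_{t_j} - X_{t_{j-1}})`. -/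
def riemannSumRight {Ω : Type*} (a b : ℝ) (Y X : ℝ → Ω → ℝ) (π : IntervalPartition a b) (ω : Ω) : ℝ :=
  ∑ j ∈ Finset.range π.n, Y (π.t (j + 1)) ω * (X (π.t (j + 1)) ω - X (π.t j) ω)

/-- Left-endpoint Riemann sum `Σ_j Y_{t_{j-1}} (X_{t_j} - X_{t_{j-1}})`. -/
def riemannSumLeft {Ω : Type*} (a b : ℝ) (Y X : ℝ → Ω → ℝ) (π : IntervalPartition a b) (ω : Ω) : ℝ :=
  ∑ j ∈ Finset.range π.n, Y (π.t j) ω * (X (π.t (j + 1)) ω - X (π.t j) ω)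

/-- `I` is the Hänggi–Klimontovich integral `∫_a^b Y_t • dX_t`: the limit in probability of
right-endpoint Riemann sums as the partition mesh tends to `0`. -/
def IsHKIntegral {Ω : Type*} [MeasureSpace Ω] (a b : ℝ) (Y X : ℝ → Ω → ℝ) (I : Ω → ℝ) : Prop :=
  TendstoInProbMesh a b (riemannSumRight a b Y X) I

/-- `I` is the Itô integral `∫_a^b Y_t dX_t`: the limit in probability of left-endpoint
Riemann sums as the partition mesh tends to `0`. -/
def IsItoIntegral {Ω : Type*} [MeasureSpace Ω] (a b : ℝ) (Y X : ℝ → Ω → ℝ) (I : Ω → ℝ) : Prop :=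
  TendstoInProbMesh a b (riemannSumLeft a b Y X) I

/-- `W` is a standard Brownian motion: it starts at `0`, has almost surely continuous paths,
independent increments, and Gaussian increments `W_t - W_s ~ N(0, t - s)`. -/
structure IsBrownianMotion {Ω : Type*} [MeasureSpace Ω] (W : ℝ → Ω → ℝ) : Prop where
  isProb : IsProbabilityMeasure (ℙ : Measure Ω)
  measurable : ∀ t, Measurable (W t)
  start : ∀ᵐ ω, W 0 ω = 0
  contPaths : ∀ᵐ ω, Continuous fun t => W t ω
  incrLaw : ∀ s t : ℝ, 0 ≤ s → s ≤ t →
    Measure.map (fun ω => W t ω - W s ω) ℙ = gaussianReal 0 (Real.toNNReal (t - s))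
  indepIncr : ∀ n : ℕ, ∀ t : Fin (n + 1) → ℝ, Monotone t → (∀ i, 0 ≤ t i) →
    iIndepFun
      (fun (i : Fin n) ω => W (t i.succ) ω - W (t i.castSucc) ω) ℙ


/-- `I` is the backward (Russo–Vallois) integral process `I_t = ∫_0^t Υ_s d⁺W_s` on `[0, T]`:
`sup_{0≤t≤T} |∫_0^t Υ_s (W_s − W_{s−ε})/ε ds − I_t| → 0` in probability as `ε ↓ 0`. -/
def IsBackwardIntegral {Ω : Type*} [MeasureSpace Ω] (T : ℝ) (Υ : ℝ → Ω → ℝ)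
    (W : ℝ → Ω → ℝ) (I : ℝ → Ω → ℝ) : Prop :=
  ∀ δ > (0 : ℝ), ∀ ρ > (0 : ℝ), ∃ ε₀ > (0 : ℝ), ∀ ε : ℝ, 0 < ε → ε < ε₀ →
    ℙ {ω | δ ≤ ⨆ t : Icc (0 : ℝ) T,
        |(∫ s in (0 : ℝ)..(t : ℝ), Υ s ω * ((W s ω - W (s - ε) ω) / ε)) - I t ω|}
      < ENNReal.ofReal ρ

set_option linter.unusedSectionVars false

namespace StepBI
variable {Ω : Type*} [MeasureSpace Ω]

/-- Measurable modulus of continuity of paths of `W` on `[-1, T]`, as an `ℝ≥0∞`-valued sup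
over rational pairs at distance at most `ε`. -/
def Dmod (W : ℝ → Ω → ℝ) (T : ℝ) (ε : ℝ) (ω : Ω) : ℝ≥0∞ :=
  ⨆ q : ℚ × ℚ, if ((q.1:ℝ) ∈ Icc (-1:ℝ) T ∧ (q.2:ℝ) ∈ Icc (-1:ℝ) T ∧ |(q.1:ℝ) - (q.2:ℝ)| ≤ ε)
    then ENNReal.ofReal |W (q.1:ℝ) ω - W (q.2:ℝ) ω| else 0

lemma measurable_Dmod {W : ℝ → Ω → ℝ} (hW : ∀ t, Measurable (W t)) (T ε : ℝ) :
    Measurable (Dmod W T ε) := by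
  apply Measurable.iSup
  intro q
  by_cases h : ((q.1:ℝ) ∈ Icc (-1:ℝ) T ∧ (q.2:ℝ) ∈ Icc (-1:ℝ) T ∧ |(q.1:ℝ) - (q.2:ℝ)| ≤ ε)
  · simp only [if_pos h]
    exact ENNReal.measurable_ofReal.comp (((hW q.1).sub (hW q.2)).abs)
  · simp only [if_neg h]; exact measurable_const

lemma Dmod_mono (W : ℝ → Ω → ℝ) (T : ℝ) {ε ε' : ℝ} (h : ε ≤ ε') (ω : Ω) :
    Dmod W T ε ω ≤ Dmod W T ε' ω := by
  apply iSup_mono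
  intro q
  by_cases hq : ((q.1:ℝ) ∈ Icc (-1:ℝ) T ∧ (q.2:ℝ) ∈ Icc (-1:ℝ) T ∧ |(q.1:ℝ) - (q.2:ℝ)| ≤ ε)
  · rw [if_pos hq, if_pos ⟨hq.1, hq.2.1, hq.2.2.trans h⟩]
  · rw [if_neg hq]; exact zero_le

lemma rat_approx {T u : ℝ} (hu : u ∈ Icc (-1:ℝ) T) (n : ℕ) :
    ∃ q : ℚ, (q:ℝ) ∈ Icc (-1:ℝ) T ∧ |(q:ℝ) - u| ≤ 1/(n+1) := by
  rcases eq_or_lt_of_le hu.1 with h | h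
  · refine ⟨-1, ?_, ?_⟩
    · constructor
      · simp
      · push_cast; rw [h]; exact hu.2
    · rw [← h]; push_cast; simp; positivity
  · have hlt : max (u - 1/(n+1)) (-1) < u := by
      apply max_lt _ h
      have : (0:ℝ) < 1/(n+1) := by positivity
      linarith
    obtain ⟨q, hq1, hq2⟩ := exists_rat_btwn hlt
    refine ⟨q, ⟨le_of_lt (lt_of_le_of_lt (le_max_right _ _) hq1), hq2.le.trans hu.2⟩, ?_⟩
    rw [abs_sub_comm, abs_of_nonneg (by linarith)]
    have := lt_of_le_of_lt (le_max_left _ _) hq1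
    linarith

lemma le_Dmod {W : ℝ → Ω → ℝ} {T : ℝ} {ω : Ω} (hcont : Continuous (fun s => W s ω))
    {u v ε : ℝ} (hε : 0 < ε) (hu : u ∈ Icc (-1:ℝ) T) (hv : v ∈ Icc (-1:ℝ) T)
    (huv : |u - v| ≤ ε/2) :
    ENNReal.ofReal |W u ω - W v ω| ≤ Dmod W T ε ω := by
  choose q1 hq1 hq1' using fun n => rat_approx hu n
  choose q2 hq2 hq2' using fun n => rat_approx hv n
  have hlim : Tendsto (fun n : ℕ => (1:ℝ)/(n+1)) atTop (nhds 0) :=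
    tendsto_one_div_add_atTop_nhds_zero_nat
  have ht1 : Tendsto (fun n => ((q1 n : ℝ))) atTop (nhds u) := by
    rw [tendsto_iff_dist_tendsto_zero]
    exact squeeze_zero (fun n => dist_nonneg) (fun n => by simpa [Real.dist_eq] using hq1' n) hlim
  have ht2 : Tendsto (fun n => ((q2 n : ℝ))) atTop (nhds v) := by
    rw [tendsto_iff_dist_tendsto_zero]
    exact squeeze_zero (fun n => dist_nonneg) (fun n => by simpa [Real.dist_eq] using hq2' n) hlim
  have hWt : Tendsto (fun n => ENNReal.ofReal |W (q1 n : ℝ) ω - W (q2 n : ℝ) ω|) atTop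
      (nhds (ENNReal.ofReal |W u ω - W v ω|)) := by
    apply (ENNReal.continuous_ofReal.tendsto _).comp
    exact (((hcont.tendsto u).comp ht1).sub ((hcont.tendsto v).comp ht2)).abs
  refine le_of_tendsto hWt ?_
  have hev : ∀ᶠ n : ℕ in atTop, (1:ℝ)/(n+1) ≤ ε/4 := by
    have := hlim.eventually_le_const (show (0:ℝ) < ε/4 by linarith)
    exact this
  filter_upwards [hev] with n hn
  have hdist : |(q1 n : ℝ) - (q2 n : ℝ)| ≤ ε := by
    have h1 := hq1' n; have h2 := hq2' n
    have : |(q1 n : ℝ) - (q2 n : ℝ)| ≤ |(q1 n:ℝ) - u| + |u - v| + |v - (q2 n:ℝ)| := by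
      have := abs_sub_le ((q1 n:ℝ)) u ((q2 n:ℝ))
      have h3 := abs_sub_le u v ((q2 n:ℝ))
      linarith
    rw [abs_sub_comm v] at this
    linarith
  calc ENNReal.ofReal |W (q1 n : ℝ) ω - W (q2 n : ℝ) ω|
      ≤ Dmod W T ε ω := by
        rw [Dmod]
        refine le_trans ?_ (le_iSup _ (q1 n, q2 n))
        rw [if_pos ⟨hq1 n, hq2 n, hdist⟩]

lemma Dmod_ne_top {W : ℝ → Ω → ℝ} {T : ℝ} {ω : Ω} (hcont : Continuous (fun s => W s ω))
    (ε : ℝ) : Dmod W T ε ω ≠ ⊤ := by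
  obtain ⟨K, hK⟩ := isCompact_Icc.exists_bound_of_continuousOn
    (s := Icc (-1:ℝ) T) (hcont.continuousOn (f := fun s => W s ω))
  have : Dmod W T ε ω ≤ ENNReal.ofReal (K + K) := by
    apply iSup_le
    intro q
    by_cases h : ((q.1:ℝ) ∈ Icc (-1:ℝ) T ∧ (q.2:ℝ) ∈ Icc (-1:ℝ) T ∧ |(q.1:ℝ) - (q.2:ℝ)| ≤ ε)
    · rw [if_pos h]
      apply ENNReal.ofReal_le_ofReal
      have h1 := hK _ h.1; have h2 := hK _ h.2.1
      simp only [Real.norm_eq_abs] at h1 h2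
      calc |W (q.1:ℝ) ω - W (q.2:ℝ) ω| ≤ |W (q.1:ℝ) ω| + |W (q.2:ℝ) ω| := abs_sub _ _
        _ ≤ K + K := add_le_add h1 h2
    · rw [if_neg h]; exact zero_le
  exact ne_top_of_le_ne_top ENNReal.ofReal_ne_top this

lemma Dmod_tendsto {W : ℝ → Ω → ℝ} {T : ℝ} {ω : Ω} (hcont : Continuous (fun s => W s ω)) :
    Tendsto (fun n : ℕ => Dmod W T (1/(n+1)) ω) atTop (nhds 0) := by
  rw [ENNReal.tendsto_nhds_zero]
  intro r hr
  set r' : ℝ := (min 1 r).toReal with hr'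
  have hr'pos : 0 < r' := by
    apply ENNReal.toReal_pos
    · exact (lt_min one_pos hr).ne'
    · exact ne_top_of_le_ne_top ENNReal.one_ne_top (min_le_left _ _)
  have hofr' : ENNReal.ofReal r' ≤ r := by
    rw [hr', ENNReal.ofReal_toReal (ne_top_of_le_ne_top ENNReal.one_ne_top (min_le_left _ _))]
    exact min_le_right _ _
  have huc : UniformContinuousOn (fun s => W s ω) (Icc (-1:ℝ) T) :=
    isCompact_Icc.uniformContinuousOn_of_continuous hcont.continuousOn
  rw [Metric.uniformContinuousOn_iff] at huc
  obtain ⟨θ, hθpos, hθ⟩ := huc r' hr'pos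
  have hev : ∀ᶠ n : ℕ in atTop, (1:ℝ)/(n+1) < θ :=
    tendsto_one_div_add_atTop_nhds_zero_nat.eventually_lt_const hθpos
  filter_upwards [hev] with n hn
  refine le_trans ?_ hofr'
  apply iSup_le
  intro q
  by_cases h : ((q.1:ℝ) ∈ Icc (-1:ℝ) T ∧ (q.2:ℝ) ∈ Icc (-1:ℝ) T ∧ |(q.1:ℝ) - (q.2:ℝ)| ≤ 1/(n+1))
  · rw [if_pos h]
    apply ENNReal.ofReal_le_ofReal
    have := hθ _ h.1 _ h.2.1 (by rw [Real.dist_eq]; exact lt_of_le_of_lt h.2.2 hn)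
    rw [Real.dist_eq] at this
    exact this.le
  · rw [if_neg h]; exact zero_le


/-- Total weight of the step process. -/
def Cz (μ : ℕ) (ζ : ℕ → Ω → ℝ) (ω : Ω) : ℝ≥0∞ :=
  ENNReal.ofReal (∑ i ∈ Finset.range μ, |ζ i ω|)

lemma measurable_Cz (μ : ℕ) {ζ : ℕ → Ω → ℝ} (hζ : ∀ i, Measurable (ζ i)) :
    Measurable (Cz μ ζ) :=
  ENNReal.measurable_ofReal.comp (Finset.measurable_sum _ (fun i _ => (hζ i).abs))

lemma ofReal_bound {a k δ : ℝ} {D : ℝ≥0∞} (hk : 0 ≤ k) (ha : 0 ≤ a) (hD : D ≠ ⊤)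
    (h : δ ≤ a * (k * D.toReal)) :
    ENNReal.ofReal δ ≤ ENNReal.ofReal a * ENNReal.ofReal k * D := by
  calc ENNReal.ofReal δ ≤ ENNReal.ofReal (a * (k * D.toReal)) := ENNReal.ofReal_le_ofReal h
    _ = ENNReal.ofReal a * (ENNReal.ofReal k * ENNReal.ofReal D.toReal) := by
        rw [ENNReal.ofReal_mul ha, ENNReal.ofReal_mul hk]
    _ = ENNReal.ofReal a * ENNReal.ofReal k * D := by
        rw [ENNReal.ofReal_toReal hD, mul_assoc]

lemma key {W : ℝ → Ω → ℝ} [IsProbabilityMeasure (ℙ : Measure Ω)]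
    (hWm : ∀ t, Measurable (W t)) (hcont : ∀ᵐ ω, Continuous fun t => W t ω)
    (T : ℝ) (μ : ℕ) {ζ : ℕ → Ω → ℝ} (hζ : ∀ i, Measurable (ζ i)) (c : ℝ≥0∞) (hc : c ≠ ⊤)
    {δ ρ : ℝ} (hδ : 0 < δ) (hρ : 0 < ρ) :
    ∃ n : ℕ, ℙ {ω | ENNReal.ofReal δ ≤ Cz μ ζ ω * c * Dmod W T (1/(↑n+1)) ω}
      < ENNReal.ofReal ρ := by
  set A : ℕ → Set Ω :=
    fun n => {ω | ENNReal.ofReal δ ≤ Cz μ ζ ω * c * Dmod W T (1/(↑n+1)) ω} with hA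
  have hmeas : ∀ n, MeasurableSet (A n) := fun n =>
    measurableSet_le measurable_const
      (((measurable_Cz μ hζ).mul measurable_const).mul (measurable_Dmod hWm _ _))
  have hanti : Antitone A := by
    intro n m hnm ω hω
    refine le_trans hω (mul_le_mul_right (Dmod_mono W T ?_ ω) _)
    apply one_div_le_one_div_of_le (by positivity)
    exact_mod_cast Nat.succ_le_succ hnm
  have hnull : ℙ (⋂ n, A n) = 0 := by
    have hsub : (⋂ n, A n) ⊆ {ω | ¬ Continuous fun t => W t ω} := by
      intro ω hω
      simp only [mem_setOf_eq]
      intro hcω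
      have htend : Tendsto (fun n : ℕ => Cz μ ζ ω * c * Dmod W T (1/(↑n+1)) ω) atTop
          (nhds 0) := by
        have h1 := Dmod_tendsto (W := W) (T := T) (ω := ω) hcω
        have h0 : Cz μ ζ ω * c ≠ ⊤ := ENNReal.mul_ne_top ENNReal.ofReal_ne_top hc
        have := ENNReal.Tendsto.const_mul h1 (Or.inr h0)
        simpa [mul_assoc] using this
      obtain ⟨n, hn⟩ := (htend.eventually_lt_const (ENNReal.ofReal_pos.mpr hδ)).exists
      exact absurd (mem_iInter.mp hω n) (not_le.mpr hn)
    rw [ae_iff] at hcont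
    exact measure_mono_null hsub hcont
  have htm := tendsto_measure_iInter_atTop (μ := (ℙ : Measure Ω)) (fun n => (hmeas n).nullMeasurableSet) hanti
    ⟨0, measure_ne_top _ _⟩
  rw [hnull] at htm
  exact (htm.eventually_lt_const (ENNReal.ofReal_pos.mpr hρ)).exists


lemma part_lt {a b : ℝ} (π : IntervalPartition a b) : ∀ {j k : ℕ}, j < k → k ≤ π.n → π.t j < π.t k := by
  intro j k
  induction k with
  | zero => omega
  | succ k ih =>
    intro hjk hk
    rcases Nat.lt_succ_iff_lt_or_eq.mp hjk with h | h
    · exact (ih h (by omega)).trans (π.mono k (by omega))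
    · subst h; exact π.mono j (by omega)

lemma part_le {a b : ℝ} (π : IntervalPartition a b) {j k : ℕ} (hjk : j ≤ k) (hk : k ≤ π.n) :
    π.t j ≤ π.t k := by
  rcases eq_or_lt_of_le hjk with h | h
  · subst h; exact le_refl _
  · exact (part_lt π h hk).le

lemma part_mem {a b : ℝ} (π : IntervalPartition a b) {j : ℕ} (hj : j ≤ π.n) :
    π.t j ∈ Icc a b := by
  constructor
  · have := part_le π (Nat.zero_le j) hj; rwa [π.first] at this
  · have := part_le π hj (le_refl _); rwa [π.last] at this

lemma part_diff_le {a b : ℝ} (π : IntervalPartition a b) {j : ℕ} (hj : j < π.n) :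
    π.t (j+1) - π.t j ≤ π.mesh :=
  Finset.le_sup' (fun i => π.t (i + 1) - π.t i) (Finset.mem_range.mpr hj)

lemma abs_min_sub_min (a x y : ℝ) : |min a x - min a y| ≤ |x - y| := by
  rcases le_total a x with h1 | h1 <;> rcases le_total a y with h2 | h2
  · simp [min_eq_left h1, min_eq_left h2, abs_nonneg]
  · rw [min_eq_left h1, min_eq_right h2, abs_of_nonneg (by linarith)]
    calc a - y ≤ x - y := by linarith
      _ ≤ |x - y| := le_abs_self _
  · rw [min_eq_right h1, min_eq_left h2, abs_of_nonpos (by linarith), abs_sub_comm]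
    calc -(x - a) ≤ y - x := by linarith
      _ ≤ |y - x| := le_abs_self _
  · simp [min_eq_right h1, min_eq_right h2]

lemma tau_le {μ : ℕ} {τ : ℕ → ℝ} (hτmono : ∀ i < μ, τ i < τ (i+1)) :
    ∀ {i j : ℕ}, i ≤ j → j ≤ μ → τ i ≤ τ j := by
  intro i j
  induction j with
  | zero => intro h _; simp [Nat.le_zero.mp h]
  | succ j ih =>
    intro hij hj
    rcases Nat.lt_or_ge i (j+1) with h | h
    · exact (ih (by omega) (by omega)).trans (hτmono j (by omega)).le
    · have : i = j + 1 := by omega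
      subst this; exact le_refl _


/-- The candidate integral process. -/
def Ifun (W : ℝ → Ω → ℝ) (τ : ℕ → ℝ) (μ : ℕ) (ζ : ℕ → Ω → ℝ) (t : ℝ) (ω : Ω) : ℝ :=
  ∑ i ∈ Finset.range μ, ζ i ω * (W (min (τ (i+1)) t) ω - W (min (τ i) t) ω)

lemma riemann_est {W : ℝ → Ω → ℝ} {T t : ℝ} {ω : Ω} (hcont : Continuous fun s => W s ω)
    {μ : ℕ} {τ : ℕ → ℝ} (hτ0 : τ 0 = 0) (hτmono : ∀ i < μ, τ i < τ (i+1)) (hτT : τ μ ≤ T)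
    (ζ : ℕ → Ω → ℝ) (htT : t ≤ T)
    (π : IntervalPartition 0 t) {κ : ℝ} (hκ : 0 < κ) (hmesh : π.mesh ≤ κ/2) :
    |riemannSumRight 0 t
        (fun s ω => ∑ i ∈ Finset.range μ, if s ∈ Ioc (τ i) (τ (i + 1)) then ζ i ω else 0) W π ω
      - Ifun W τ μ ζ t ω|
      ≤ (∑ i ∈ Finset.range μ, |ζ i ω|) * (6 * (Dmod W T κ ω).toReal) := by
  set M := (Dmod W T κ ω).toReal with hMdef
  have hM0 : 0 ≤ M := ENNReal.toReal_nonneg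
  have hpair : ∀ u v : ℝ, u ∈ Icc (0:ℝ) T → v ∈ Icc (0:ℝ) T → |u - v| ≤ κ/2 →
      |W u ω - W v ω| ≤ M := by
    intro u v hu hv huv
    have h1 : ENNReal.ofReal |W u ω - W v ω| ≤ Dmod W T κ ω :=
      le_Dmod hcont hκ ⟨by linarith [hu.1], hu.2⟩ ⟨by linarith [hv.1], hv.2⟩ huv
    have h2 := ENNReal.toReal_mono (Dmod_ne_top hcont κ) h1
    rwa [ENNReal.toReal_ofReal (abs_nonneg _)] at h2
  set n := π.n with hn
  set p := π.t with hp
  set φ : ℕ → ℝ → ℝ := fun i u => W (min (τ (i+1)) u) ω - W (min (τ i) u) ω with hφ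
  have hτnonneg : ∀ i, i ≤ μ → 0 ≤ τ i := fun i hi => by
    rw [← hτ0]; exact tau_le hτmono (Nat.zero_le i) hi
  have hτT' : ∀ i, i ≤ μ → τ i ≤ T := fun i hi =>
    le_trans (tau_le hτmono hi (le_refl μ)) hτT
  have hS : riemannSumRight 0 t
        (fun s ω => ∑ i ∈ Finset.range μ, if s ∈ Ioc (τ i) (τ (i + 1)) then ζ i ω else 0) W π ω
      = ∑ i ∈ Finset.range μ, ζ i ω * ∑ j ∈ Finset.range n,
          (if p (j+1) ∈ Ioc (τ i) (τ (i+1)) then (W (p (j+1)) ω - W (p j) ω) else 0) := by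
    rw [riemannSumRight]
    have hterm : ∀ j ∈ Finset.range n,
        (∑ i ∈ Finset.range μ, if p (j+1) ∈ Ioc (τ i) (τ (i+1)) then ζ i ω else 0)
          * (W (p (j+1)) ω - W (p j) ω)
        = ∑ i ∈ Finset.range μ, ζ i ω *
          (if p (j+1) ∈ Ioc (τ i) (τ (i+1)) then (W (p (j+1)) ω - W (p j) ω) else 0) := by
      intro j _
      rw [Finset.sum_mul]
      refine Finset.sum_congr rfl (fun i _ => ?_)
      by_cases h : p (j+1) ∈ Ioc (τ i) (τ (i+1)) <;> simp [h]
    rw [Finset.sum_congr rfl hterm, Finset.sum_comm]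
    refine Finset.sum_congr rfl (fun i _ => (Finset.mul_sum _ _ _).symm)
  have hI : Ifun W τ μ ζ t ω = ∑ i ∈ Finset.range μ, ζ i ω *
      ∑ j ∈ Finset.range n, (φ i (p (j+1)) - φ i (p j)) := by
    rw [Ifun]
    refine Finset.sum_congr rfl (fun i hi => ?_)
    rw [Finset.mem_range] at hi
    congr 1
    rw [Finset.sum_range_sub (fun j => φ i (p j)) n]
    have hpn : p n = t := π.last
    have hp0 : p 0 = 0 := π.first
    rw [hpn, hp0]
    have h1 : min (τ (i+1)) (0:ℝ) = 0 := min_eq_right (hτnonneg _ hi)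
    have h2 : min (τ i) (0:ℝ) = 0 := min_eq_right (hτnonneg _ hi.le)
    simp [hφ, h1, h2]
  have hcore : ∀ i ∈ Finset.range μ, |∑ j ∈ Finset.range n,
      ((if p (j+1) ∈ Ioc (τ i) (τ (i+1)) then (W (p (j+1)) ω - W (p j) ω) else 0)
        - (φ i (p (j+1)) - φ i (p j)))| ≤ 6 * M := by
    intro i hi
    rw [Finset.mem_range] at hi
    have ha0 : 0 ≤ τ i := hτnonneg i hi.le
    have hab : τ i < τ (i+1) := hτmono i hi
    have hbT : τ (i+1) ≤ T := hτT' (i+1) hi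
    have hpt : ∀ j ∈ Finset.range n,
        |(if p (j+1) ∈ Ioc (τ i) (τ (i+1)) then (W (p (j+1)) ω - W (p j) ω) else 0)
          - (φ i (p (j+1)) - φ i (p j))|
        ≤ if (p j < τ i ∧ τ i < p (j+1)) ∨ (p j < τ (i+1) ∧ τ (i+1) < p (j+1))
          then 3*M else 0 := by
      intro j hj
      rw [Finset.mem_range] at hj
      have hpj : p j < p (j+1) := π.mono j hj
      have hmem0 : p j ∈ Icc (0:ℝ) t := part_mem π hj.le
      have hmem1 : p (j+1) ∈ Icc (0:ℝ) t := part_mem π hj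
      have hpj0 : (0:ℝ) ≤ p j := hmem0.1
      have hpjT : p j ≤ T := le_trans hmem0.2 htT
      have hpj1T : p (j+1) ≤ T := le_trans hmem1.2 htT
      have hd : p (j+1) - p j ≤ κ/2 := le_trans (part_diff_le π hj) hmesh
      have hite_nonneg : (0:ℝ) ≤ if (p j < τ i ∧ τ i < p (j+1)) ∨
          (p j < τ (i+1) ∧ τ (i+1) < p (j+1)) then 3*M else 0 := by
        split_ifs <;> positivity
      by_cases h1 : p (j+1) ≤ τ i
      · have he : p (j+1) ∉ Ioc (τ i) (τ (i+1)) := fun hmem => absurd hmem.1 (not_lt.mpr h1)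
        rw [if_neg he]
        have e1 : min (τ (i+1)) (p (j+1)) = p (j+1) := min_eq_right (h1.trans hab.le)
        have e2 : min (τ i) (p (j+1)) = p (j+1) := min_eq_right h1
        have e3 : min (τ (i+1)) (p j) = p j := min_eq_right (by linarith)
        have e4 : min (τ i) (p j) = p j := min_eq_right (by linarith)
        simp only [hφ, e1, e2, e3, e4]
        simpa using hite_nonneg
      · by_cases h2 : τ (i+1) ≤ p j
        · have he : p (j+1) ∉ Ioc (τ i) (τ (i+1)) := fun hmem =>
            absurd hmem.2 (not_le.mpr (by linarith))
          rw [if_neg he]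
          have e1 : min (τ (i+1)) (p (j+1)) = τ (i+1) := min_eq_left (by linarith)
          have e2 : min (τ i) (p (j+1)) = τ i := min_eq_left (by linarith)
          have e3 : min (τ (i+1)) (p j) = τ (i+1) := min_eq_left h2
          have e4 : min (τ i) (p j) = τ i := min_eq_left (by linarith)
          simp only [hφ, e1, e2, e3, e4]
          simpa using hite_nonneg
        · by_cases h3 : τ i ≤ p j ∧ p (j+1) ≤ τ (i+1)
          · have he : p (j+1) ∈ Ioc (τ i) (τ (i+1)) := ⟨lt_of_le_of_lt h3.1 hpj, h3.2⟩
            rw [if_pos he]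
            have e1 : min (τ (i+1)) (p (j+1)) = p (j+1) := min_eq_right h3.2
            have e2 : min (τ i) (p (j+1)) = τ i := min_eq_left (by linarith [h3.1])
            have e3 : min (τ (i+1)) (p j) = p j := min_eq_right (by linarith [h3.2])
            have e4 : min (τ i) (p j) = τ i := min_eq_left h3.1
            simp only [hφ, e1, e2, e3, e4]
            have : W (p (j+1)) ω - W (p j) ω - (W (p (j+1)) ω - W (τ i) ω
                - (W (p j) ω - W (τ i) ω)) = 0 := by ring
            rw [this, abs_zero]
            exact hite_nonneg
          · push_neg at h1 h2
            have hcond : (p j < τ i ∧ τ i < p (j+1)) ∨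
                (p j < τ (i+1) ∧ τ (i+1) < p (j+1)) := by
              by_cases h4 : τ i ≤ p j
              · right
                exact ⟨h2, by
                  rcases not_and_or.mp h3 with h | h
                  · exact absurd h4 h
                  · exact not_le.mp h⟩
              · left; exact ⟨not_le.mp h4, h1⟩
            rw [if_pos hcond]
            have hX : |(if p (j+1) ∈ Ioc (τ i) (τ (i+1)) then
                (W (p (j+1)) ω - W (p j) ω) else 0)| ≤ M := by
              split_ifs
              · apply hpair _ _ ⟨hmem1.1, hpj1T⟩ ⟨hpj0, hpjT⟩
                rw [abs_of_nonneg (by linarith)]; exact hd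
              · simpa using hM0
            have hmemb1 : min (τ (i+1)) (p (j+1)) ∈ Icc (0:ℝ) T :=
              ⟨le_min (by linarith) hmem1.1, le_trans (min_le_left _ _) hbT⟩
            have hmemb0 : min (τ (i+1)) (p j) ∈ Icc (0:ℝ) T :=
              ⟨le_min (by linarith) hpj0, le_trans (min_le_left _ _) hbT⟩
            have hmema1 : min (τ i) (p (j+1)) ∈ Icc (0:ℝ) T :=
              ⟨le_min ha0 hmem1.1, le_trans (min_le_left _ _) (by linarith)⟩
            have hmema0 : min (τ i) (p j) ∈ Icc (0:ℝ) T :=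
              ⟨le_min ha0 hpj0, le_trans (min_le_left _ _) (by linarith)⟩
            have hdist : |p (j+1) - p j| ≤ κ/2 := by
              rw [abs_of_nonneg (by linarith)]; exact hd
            have hb' : |W (min (τ (i+1)) (p (j+1))) ω - W (min (τ (i+1)) (p j)) ω| ≤ M :=
              hpair _ _ hmemb1 hmemb0 (le_trans (abs_min_sub_min _ _ _) hdist)
            have ha' : |W (min (τ i) (p (j+1))) ω - W (min (τ i) (p j)) ω| ≤ M :=
              hpair _ _ hmema1 hmema0 (le_trans (abs_min_sub_min _ _ _) hdist)
            have hY : |φ i (p (j+1)) - φ i (p j)| ≤ 2 * M := by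
              simp only [hφ]
              have : W (min (τ (i+1)) (p (j+1))) ω - W (min (τ i) (p (j+1))) ω
                  - (W (min (τ (i+1)) (p j)) ω - W (min (τ i) (p j)) ω)
                  = (W (min (τ (i+1)) (p (j+1))) ω - W (min (τ (i+1)) (p j)) ω)
                  - (W (min (τ i) (p (j+1))) ω - W (min (τ i) (p j)) ω) := by ring
              rw [this]
              calc |_ - _| ≤ |W (min (τ (i+1)) (p (j+1))) ω - W (min (τ (i+1)) (p j)) ω|
                  + |W (min (τ i) (p (j+1))) ω - W (min (τ i) (p j)) ω| := abs_sub _ _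
                _ ≤ 2 * M := by linarith
            calc |_ - (φ i (p (j+1)) - φ i (p j))|
                ≤ |(if p (j+1) ∈ Ioc (τ i) (τ (i+1)) then (W (p (j+1)) ω - W (p j) ω) else 0)|
                  + |φ i (p (j+1)) - φ i (p j)| := abs_sub _ _
              _ ≤ 3 * M := by linarith
    calc |∑ j ∈ Finset.range n, _| ≤ ∑ j ∈ Finset.range n,
          |(if p (j+1) ∈ Ioc (τ i) (τ (i+1)) then (W (p (j+1)) ω - W (p j) ω) else 0)
            - (φ i (p (j+1)) - φ i (p j))| := Finset.abs_sum_le_sum_abs _ _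
      _ ≤ ∑ j ∈ Finset.range n, (if (p j < τ i ∧ τ i < p (j+1)) ∨
            (p j < τ (i+1) ∧ τ (i+1) < p (j+1)) then 3*M else 0) := Finset.sum_le_sum hpt
      _ = ((Finset.range n).filter (fun j => (p j < τ i ∧ τ i < p (j+1)) ∨
            (p j < τ (i+1) ∧ τ (i+1) < p (j+1)))).card • (3*M) := by
          rw [← Finset.sum_filter, Finset.sum_const]
      _ ≤ 6 * M := by
          have hone : ∀ x : ℝ,
              ((Finset.range n).filter (fun j => p j < x ∧ x < p (j+1))).card ≤ 1 := by
            intro x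
            rw [Finset.card_le_one]
            intro j hj k hk
            simp only [Finset.mem_filter, Finset.mem_range] at hj hk
            by_contra hne
            rcases Nat.lt_or_ge j k with h | h
            · have : p (j+1) ≤ p k := part_le π (by omega) (by omega)
              linarith [hj.2.2, hk.2.1]
            · have hkj : k < j := by omega
              have : p (k+1) ≤ p j := part_le π (by omega) (by omega)
              linarith [hk.2.2, hj.2.1]
          have hcard : ((Finset.range n).filter (fun j => (p j < τ i ∧ τ i < p (j+1)) ∨
              (p j < τ (i+1) ∧ τ (i+1) < p (j+1)))).card ≤ 2 := by
            rw [Finset.filter_or]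
            calc _ ≤ _ + _ := Finset.card_union_le _ _
              _ ≤ 1 + 1 := add_le_add (hone (τ i)) (hone (τ (i+1)))
          rw [nsmul_eq_mul]
          have h2 : (((Finset.range n).filter (fun j => (p j < τ i ∧ τ i < p (j+1)) ∨
              (p j < τ (i+1) ∧ τ (i+1) < p (j+1)))).card : ℝ) ≤ 2 := by
            exact_mod_cast hcard
          nlinarith [hM0, h2]
  rw [hS, hI, ← Finset.sum_sub_distrib]
  calc |∑ i ∈ Finset.range μ, _| ≤ ∑ i ∈ Finset.range μ, |ζ i ω *
        (∑ j ∈ Finset.range n, (if p (j+1) ∈ Ioc (τ i) (τ (i+1))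
          then (W (p (j+1)) ω - W (p j) ω) else 0))
        - ζ i ω * (∑ j ∈ Finset.range n, (φ i (p (j+1)) - φ i (p j)))| :=
      Finset.abs_sum_le_sum_abs _ _
    _ ≤ ∑ i ∈ Finset.range μ, |ζ i ω| * (6 * M) := by
      refine Finset.sum_le_sum (fun i hi => ?_)
      rw [← mul_sub, abs_mul, ← Finset.sum_sub_distrib]
      exact mul_le_mul_of_nonneg_left (hcore i hi) (abs_nonneg _)
    _ = (∑ i ∈ Finset.range μ, |ζ i ω|) * (6 * M) := (Finset.sum_mul _ _ _).symm


lemma pair_est {W : ℝ → Ω → ℝ} {T : ℝ} {ω : Ω} (hcont : Continuous fun s => W s ω)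
    {κ : ℝ} (hκ : 0 < κ) {u v : ℝ} (hu : u ∈ Icc (-1:ℝ) T) (hv : v ∈ Icc (-1:ℝ) T)
    (huv : |u - v| ≤ κ/2) : |W u ω - W v ω| ≤ (Dmod W T κ ω).toReal := by
  have h1 : ENNReal.ofReal |W u ω - W v ω| ≤ Dmod W T κ ω := le_Dmod hcont hκ hu hv huv
  have h2 := ENNReal.toReal_mono (Dmod_ne_top hcont κ) h1
  rwa [ENNReal.toReal_ofReal (abs_nonneg _)] at h2

lemma avg_est {W : ℝ → Ω → ℝ} {T : ℝ} {ω : Ω} (hcont : Continuous fun s => W s ω)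
    {a' b' ε κ : ℝ} (h0 : 0 ≤ a') (hab : a' ≤ b') (hbT : b' ≤ T) (hε : 0 < ε) (hε1 : ε ≤ 1)
    (hεκ : ε ≤ κ/2) (hκ : 0 < κ) :
    |(∫ s in a'..b', (W s ω - W (s - ε) ω) / ε) - (W b' ω - W a' ω)|
      ≤ 2 * (Dmod W T κ ω).toReal := by
  set M := (Dmod W T κ ω).toReal with hM
  have hM0 : 0 ≤ M := ENNReal.toReal_nonneg
  have hWint : ∀ u v : ℝ, IntervalIntegrable (fun s => W s ω) volume u v := fun u v =>
    hcont.intervalIntegrable u v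
  have hWsint : ∀ u v : ℝ, IntervalIntegrable (fun s => W (s - ε) ω) volume u v := fun u v =>
    (hcont.comp (continuous_id.sub continuous_const)).intervalIntegrable u v
  set A1 := ∫ s in a'..b', W s ω with hA1
  set B := ∫ s in (b'-ε)..b', W s ω with hB
  set C := ∫ s in (a'-ε)..a', W s ω with hC
  have h2 : (∫ s in a'..b', W (s - ε) ω) = ∫ s in (a'-ε)..(b'-ε), W s ω :=
    intervalIntegral.integral_comp_sub_right (fun s => W s ω) ε
  have h3 : A1 - (∫ s in (a'-ε)..(b'-ε), W s ω) = B - C := by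
    have e1 := intervalIntegral.integral_add_adjacent_intervals (hWint (a'-ε) a') (hWint a' b')
    have e2 := intervalIntegral.integral_add_adjacent_intervals
      (hWint (a'-ε) (b'-ε)) (hWint (b'-ε) b')
    rw [← hA1] at e1
    rw [← hB] at e2
    rw [← hC] at e1
    linarith
  have h1 : (∫ s in a'..b', (W s ω - W (s - ε) ω) / ε) = (B - C) / ε := by
    have : (∫ s in a'..b', (W s ω - W (s - ε) ω) / ε)
        = (∫ s in a'..b', (W s ω - W (s - ε) ω)) / ε := intervalIntegral.integral_div _ _
    rw [this, intervalIntegral.integral_sub (hWint a' b') (hWsint a' b'), h2, h3]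
  have hBdiff : B - ε * W b' ω = ∫ s in (b'-ε)..b', (W s ω - W b' ω) := by
    rw [intervalIntegral.integral_sub (hWint _ _) (intervalIntegrable_const)]
    congr 1
    rw [intervalIntegral.integral_const]
    rw [smul_eq_mul]
    ring
  have hCdiff : C - ε * W a' ω = ∫ s in (a'-ε)..a', (W s ω - W a' ω) := by
    rw [intervalIntegral.integral_sub (hWint _ _) (intervalIntegrable_const)]
    congr 1
    rw [intervalIntegral.integral_const]
    rw [smul_eq_mul]
    ring
  have hBbd : |∫ s in (b'-ε)..b', (W s ω - W b' ω)| ≤ M * ε := by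
    have := intervalIntegral.norm_integral_le_of_norm_le_const
      (f := fun s => W s ω - W b' ω) (C := M) (a := b'-ε) (b := b') ?_
    · rw [Real.norm_eq_abs] at this
      calc |∫ s in (b'-ε)..b', (W s ω - W b' ω)| ≤ M * |b' - (b'-ε)| := this
        _ = M * ε := by rw [show b' - (b'-ε) = ε by ring, abs_of_pos hε]
    · intro x hx
      rw [uIoc_of_le (by linarith)] at hx
      rw [Real.norm_eq_abs]
      apply pair_est hcont hκ
      · exact ⟨by linarith [hx.1], by linarith [hx.2]⟩
      · exact ⟨by linarith, hbT⟩
      · rw [abs_of_nonpos (by linarith [hx.2])]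
        linarith [hx.1]
  have hCbd : |∫ s in (a'-ε)..a', (W s ω - W a' ω)| ≤ M * ε := by
    have := intervalIntegral.norm_integral_le_of_norm_le_const
      (f := fun s => W s ω - W a' ω) (C := M) (a := a'-ε) (b := a') ?_
    · rw [Real.norm_eq_abs] at this
      calc |∫ s in (a'-ε)..a', (W s ω - W a' ω)| ≤ M * |a' - (a'-ε)| := this
        _ = M * ε := by rw [show a' - (a'-ε) = ε by ring, abs_of_pos hε]
    · intro x hx
      rw [uIoc_of_le (by linarith)] at hx
      rw [Real.norm_eq_abs]
      apply pair_est hcont hκ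
      · exact ⟨by linarith [hx.1], by linarith [hx.2, hab]⟩
      · exact ⟨by linarith, by linarith⟩
      · rw [abs_of_nonpos (by linarith [hx.2])]
        linarith [hx.1]
  have hkey : (∫ s in a'..b', (W s ω - W (s - ε) ω) / ε) - (W b' ω - W a' ω)
      = ((∫ s in (b'-ε)..b', (W s ω - W b' ω)) - (∫ s in (a'-ε)..a', (W s ω - W a' ω))) / ε := by
    rw [h1, ← hBdiff, ← hCdiff]
    field_simp
    ring
  rw [hkey, abs_div, abs_of_pos hε, div_le_iff₀ hε]
  calc |_ - _| ≤ |∫ s in (b'-ε)..b', (W s ω - W b' ω)|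
        + |∫ s in (a'-ε)..a', (W s ω - W a' ω)| := abs_sub _ _
    _ ≤ M * ε + M * ε := add_le_add hBbd hCbd
    _ = 2 * M * ε := by ring


lemma indicator_intable {g : ℝ → ℝ} (hg : Continuous g) {A : Set ℝ} (hA : MeasurableSet A)
    (u v : ℝ) : IntervalIntegrable (A.indicator g) volume u v := by
  rw [intervalIntegrable_iff]
  exact (hg.integrableOn_uIoc).indicator hA

lemma indicator_integral {g : ℝ → ℝ} (hg : Continuous g) {a b t : ℝ}
    (h0a : 0 ≤ a) (hab : a ≤ b) (ht0 : 0 ≤ t) :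
    ∫ s in (0:ℝ)..t, (Ioc a b).indicator g s = ∫ s in (min a t)..(min b t), g s := by
  have hA : MeasurableSet (Ioc a b) := measurableSet_Ioc
  set a' := min a t with ha'
  set b' := min b t with hb'
  have h0a' : 0 ≤ a' := le_min h0a ht0
  have ha'b' : a' ≤ b' := min_le_min hab (le_refl t)
  have hb't : b' ≤ t := min_le_right _ _
  have e1 := intervalIntegral.integral_add_adjacent_intervals
    (indicator_intable hg hA 0 a') (indicator_intable hg hA a' b')
  have e2 := intervalIntegral.integral_add_adjacent_intervals
    (indicator_intable hg hA 0 b') (indicator_intable hg hA b' t)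
  have hz1 : (∫ s in (0:ℝ)..a', (Ioc a b).indicator g s) = 0 := by
    have heq : (∫ s in (0:ℝ)..a', (Ioc a b).indicator g s)
        = ∫ s in (0:ℝ)..a', (0:ℝ) := by
      apply intervalIntegral.integral_congr_ae
      filter_upwards with s hs
      rw [uIoc_of_le h0a'] at hs
      have hsa : s ≤ a := le_trans hs.2 (min_le_left _ _)
      exact indicator_of_notMem (fun hmem => absurd hmem.1 (not_lt.mpr hsa)) g
    rw [heq, intervalIntegral.integral_zero]
  have hz2 : (∫ s in b'..t, (Ioc a b).indicator g s) = 0 := by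
    rcases eq_or_lt_of_le hb't with h | h
    · rw [h]; exact intervalIntegral.integral_same
    · have hbb : b' = b := by
        rcases le_total b t with hbt | hbt
        · rw [hb', min_eq_left hbt]
        · exfalso; rw [hb', min_eq_right hbt] at h; exact lt_irrefl t h
      have heq : (∫ s in b'..t, (Ioc a b).indicator g s) = ∫ s in b'..t, (0:ℝ) := by
        apply intervalIntegral.integral_congr_ae
        filter_upwards with s hs
        rw [uIoc_of_le h.le] at hs
        refine indicator_of_notMem (fun hmem => absurd hmem.2 (not_le.mpr ?_)) g
        rw [← hbb]; exact hs.1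
      rw [heq, intervalIntegral.integral_zero]
  have hmid : (∫ s in a'..b', (Ioc a b).indicator g s) = ∫ s in a'..b', g s := by
    apply intervalIntegral.integral_congr_ae
    filter_upwards with s hs
    rw [uIoc_of_le ha'b'] at hs
    rcases le_total a t with hat | hat
    · have hmem : s ∈ Ioc a b := by
        constructor
        · rw [ha', min_eq_left hat] at hs; exact hs.1
        · exact le_trans hs.2 (min_le_left _ _)
      exact indicator_of_mem hmem g
    · exfalso
      have hb'a' : b' ≤ a' := by
        rw [ha', min_eq_right hat, hb', min_eq_right (le_trans hat hab)]
      exact absurd (lt_of_lt_of_le hs.1 (le_trans hs.2 hb'a')) (lt_irrefl a')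
  rw [← e2, ← e1, hz1, hz2, hmid]
  ring

lemma backward_est {W : ℝ → Ω → ℝ} {T t : ℝ} {ω : Ω} (hcont : Continuous fun s => W s ω)
    {μ : ℕ} {τ : ℕ → ℝ} (hτ0 : τ 0 = 0) (hτmono : ∀ i < μ, τ i < τ (i+1)) (hτT : τ μ ≤ T)
    (ζ : ℕ → Ω → ℝ) (ht0 : 0 ≤ t) (htT : t ≤ T)
    {ε κ : ℝ} (hε : 0 < ε) (hε1 : ε ≤ 1) (hεκ : ε ≤ κ/2) (hκ : 0 < κ) :
    |(∫ s in (0:ℝ)..t, (∑ i ∈ Finset.range μ, if s ∈ Ioc (τ i) (τ (i + 1)) then ζ i ω else 0)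
        * ((W s ω - W (s - ε) ω) / ε)) - Ifun W τ μ ζ t ω|
      ≤ (∑ i ∈ Finset.range μ, |ζ i ω|) * (2 * (Dmod W T κ ω).toReal) := by
  set g : ℝ → ℝ := fun s => (W s ω - W (s - ε) ω) / ε with hg
  have hgc : Continuous g :=
    (hcont.sub (hcont.comp (continuous_id.sub continuous_const))).div_const ε
  have hτnonneg : ∀ i, i ≤ μ → 0 ≤ τ i := fun i hi => by
    rw [← hτ0]; exact tau_le hτmono (Nat.zero_le i) hi
  have hτT' : ∀ i, i ≤ μ → τ i ≤ T := fun i hi =>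
    le_trans (tau_le hτmono hi (le_refl μ)) hτT
  have hintegrand : (fun s => (∑ i ∈ Finset.range μ,
        if s ∈ Ioc (τ i) (τ (i + 1)) then ζ i ω else 0) * g s)
      = fun s => ∑ i ∈ Finset.range μ, ζ i ω * (Ioc (τ i) (τ (i+1))).indicator g s := by
    funext s
    rw [Finset.sum_mul]
    refine Finset.sum_congr rfl (fun i _ => ?_)
    by_cases h : s ∈ Ioc (τ i) (τ (i+1))
    · rw [if_pos h, indicator_of_mem h]
    · rw [if_neg h, indicator_of_notMem h, mul_zero, zero_mul]
  have hsplit : (∫ s in (0:ℝ)..t, (∑ i ∈ Finset.range μ,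
        if s ∈ Ioc (τ i) (τ (i + 1)) then ζ i ω else 0) * g s)
      = ∑ i ∈ Finset.range μ, ζ i ω * ∫ s in (min (τ i) t)..(min (τ (i+1)) t), g s := by
    rw [hintegrand, intervalIntegral.integral_finset_sum]
    · refine Finset.sum_congr rfl (fun i hi => ?_)
      rw [Finset.mem_range] at hi
      rw [intervalIntegral.integral_const_mul,
        indicator_integral hgc (hτnonneg i hi.le) (hτmono i hi).le ht0]
    · intro i _
      exact (indicator_intable hgc measurableSet_Ioc 0 t).const_mul _
  rw [hsplit, Ifun, ← Finset.sum_sub_distrib]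
  calc |∑ i ∈ Finset.range μ, _| ≤ ∑ i ∈ Finset.range μ,
        |ζ i ω * (∫ s in (min (τ i) t)..(min (τ (i+1)) t), g s)
          - ζ i ω * (W (min (τ (i+1)) t) ω - W (min (τ i) t) ω)| :=
      Finset.abs_sum_le_sum_abs _ _
    _ ≤ ∑ i ∈ Finset.range μ, |ζ i ω| * (2 * (Dmod W T κ ω).toReal) := by
      refine Finset.sum_le_sum (fun i hi => ?_)
      rw [Finset.mem_range] at hi
      rw [← mul_sub, abs_mul]
      refine mul_le_mul_of_nonneg_left ?_ (abs_nonneg _)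
      exact avg_est hcont (le_min (hτnonneg i hi.le) ht0)
        (min_le_min (hτmono i hi).le (le_refl t))
        (le_trans (min_le_right _ _) htT) hε hε1 hεκ hκ
    _ = (∑ i ∈ Finset.range μ, |ζ i ω|) * (2 * (Dmod W T κ ω).toReal) :=
      (Finset.sum_mul _ _ _).symm



theorem main
    {Ω : Type*} [MeasureSpace Ω] (W : ℝ → Ω → ℝ)
    (hWisProb : IsProbabilityMeasure (ℙ : Measure Ω))
    (hWmeasurable : ∀ t, Measurable (W t))
    (hWcontPaths : ∀ᵐ ω, Continuous fun t => W t ω)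
    (T : ℝ) (hT : 0 < T) (μ : ℕ) (hμ : 0 < μ) (τ : ℕ → ℝ)
    (hτ0 : τ 0 = 0) (hτT : τ μ = T) (hτmono : ∀ i < μ, τ i < τ (i + 1))
    (ζ : ℕ → Ω → ℝ) (hζ : ∀ i, Measurable (ζ i)) :
    ∃ I : ℝ → Ω → ℝ,
      (∀ δ > (0 : ℝ), ∀ ρ > (0 : ℝ), ∃ ε₀ > (0 : ℝ), ∀ ε : ℝ, 0 < ε → ε < ε₀ →
        ℙ {ω | δ ≤ ⨆ t : Icc (0 : ℝ) T,
            |(∫ s in (0 : ℝ)..(t : ℝ),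
              (∑ i ∈ Finset.range μ, if s ∈ Ioc (τ i) (τ (i + 1)) then ζ i ω else 0)
                * ((W s ω - W (s - ε) ω) / ε)) - I t ω|}
          < ENNReal.ofReal ρ) ∧
      ∀ t : ℝ, 0 < t → t ≤ T → ∀ ε > (0:ℝ), ∀ δ > (0:ℝ), ∃ η > (0:ℝ), ∀ π : IntervalPartition 0 t,
        π.mesh < η → ℙ {ω | ε ≤ ‖riemannSumRight 0 t
            (fun s ω => ∑ i ∈ Finset.range μ, if s ∈ Ioc (τ i) (τ (i + 1)) then ζ i ω else 0)
            W π ω - I t ω‖} < ENNReal.ofReal δ := by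
  haveI := hWisProb
  have h0 : ℙ {ω | ¬ Continuous fun s : ℝ => W s ω} = 0 := by
    have := hWcontPaths; rwa [ae_iff] at this
  have hτT' : τ μ ≤ T := le_of_eq hτT
  have hζsum : ∀ ω : Ω, 0 ≤ ∑ i ∈ Finset.range μ, |ζ i ω| :=
    fun ω => Finset.sum_nonneg (fun i _ => abs_nonneg _)
  refine ⟨Ifun W τ μ ζ, ?_, ?_⟩
  · intro δ hδ ρ hρ
    obtain ⟨n, hn⟩ := key hWmeasurable hWcontPaths T μ hζ (ENNReal.ofReal 2)
      ENNReal.ofReal_ne_top hδ hρ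
    have hκpos : (0:ℝ) < 1/(↑n+1) := by positivity
    refine ⟨min ((1/(↑n+1))/2) (1/2), by positivity, ?_⟩
    intro ε hε hεlt
    refine lt_of_le_of_lt ?_ hn
    have hεκ : ε ≤ (1/(↑n+1))/2 := le_trans hεlt.le (min_le_left _ _)
    have hε1 : ε ≤ 1 := le_trans hεlt.le (le_trans (min_le_right _ _) (by norm_num))
    have hsub : {ω | δ ≤ ⨆ t : Icc (0 : ℝ) T,
            |(∫ s in (0 : ℝ)..(t : ℝ),
              (∑ i ∈ Finset.range μ, if s ∈ Ioc (τ i) (τ (i + 1)) then ζ i ω else 0)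
                * ((W s ω - W (s - ε) ω) / ε)) - Ifun W τ μ ζ (↑t) ω|}
        ⊆ {ω | ¬ Continuous fun s : ℝ => W s ω} ∪
          {ω | ENNReal.ofReal δ ≤ Cz μ ζ ω * ENNReal.ofReal 2 * Dmod W T (1/(↑n+1)) ω} := by
      intro ω hω
      by_cases hcω : Continuous fun s : ℝ => W s ω
      · right
        simp only [mem_setOf_eq] at hω ⊢
        haveI : Nonempty (Icc (0:ℝ) T) := ⟨⟨0, ⟨le_refl 0, hT.le⟩⟩⟩
        have hδ' : δ ≤ (∑ i ∈ Finset.range μ, |ζ i ω|)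
            * (2 * (Dmod W T (1/(↑n+1)) ω).toReal) := by
          refine le_trans hω (ciSup_le fun t => ?_)
          exact backward_est hcω hτ0 hτmono hτT' ζ t.2.1 t.2.2 hε hε1 hεκ hκpos
        exact ofReal_bound (by norm_num) (hζsum ω) (Dmod_ne_top hcω _) hδ'
      · left; exact hcω
    calc ℙ _ ≤ ℙ ({ω | ¬ Continuous fun s : ℝ => W s ω} ∪
          {ω | ENNReal.ofReal δ ≤ Cz μ ζ ω * ENNReal.ofReal 2 * Dmod W T (1/(↑n+1)) ω}) :=
        measure_mono hsub
      _ ≤ ℙ {ω | ¬ Continuous fun s : ℝ => W s ω} +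
          ℙ {ω | ENNReal.ofReal δ ≤ Cz μ ζ ω * ENNReal.ofReal 2 * Dmod W T (1/(↑n+1)) ω} :=
        measure_union_le _ _
      _ = ℙ {ω | ENNReal.ofReal δ ≤ Cz μ ζ ω * ENNReal.ofReal 2 * Dmod W T (1/(↑n+1)) ω} := by
        rw [h0, zero_add]
  · intro t ht0 htT ε hε δ hδ
    obtain ⟨n, hn⟩ := key hWmeasurable hWcontPaths T μ hζ (ENNReal.ofReal 6)
      ENNReal.ofReal_ne_top hε hδ
    have hκpos : (0:ℝ) < 1/(↑n+1) := by positivity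
    refine ⟨(1/(↑n+1))/2, by positivity, ?_⟩
    intro π hπ
    refine lt_of_le_of_lt ?_ hn
    have hsub : {ω | ε ≤ ‖riemannSumRight 0 t
            (fun s ω => ∑ i ∈ Finset.range μ, if s ∈ Ioc (τ i) (τ (i + 1)) then ζ i ω else 0)
            W π ω - Ifun W τ μ ζ t ω‖}
        ⊆ {ω | ¬ Continuous fun s : ℝ => W s ω} ∪
          {ω | ENNReal.ofReal ε ≤ Cz μ ζ ω * ENNReal.ofReal 6 * Dmod W T (1/(↑n+1)) ω} := by
      intro ω hω
      by_cases hcω : Continuous fun s : ℝ => W s ω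
      · right
        simp only [mem_setOf_eq, Real.norm_eq_abs] at hω ⊢
        have hδ' : ε ≤ (∑ i ∈ Finset.range μ, |ζ i ω|)
            * (6 * (Dmod W T (1/(↑n+1)) ω).toReal) :=
          le_trans hω (riemann_est hcω hτ0 hτmono hτT' ζ htT π hκpos hπ.le)
        exact ofReal_bound (by norm_num) (hζsum ω) (Dmod_ne_top hcω _) hδ'
      · left; exact hcω
    calc ℙ _ ≤ ℙ ({ω | ¬ Continuous fun s : ℝ => W s ω} ∪
          {ω | ENNReal.ofReal ε ≤ Cz μ ζ ω * ENNReal.ofReal 6 * Dmod W T (1/(↑n+1)) ω}) :=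
        measure_mono hsub
      _ ≤ ℙ {ω | ¬ Continuous fun s : ℝ => W s ω} +
          ℙ {ω | ENNReal.ofReal ε ≤ Cz μ ζ ω * ENNReal.ofReal 6 * Dmod W T (1/(↑n+1)) ω} :=
        measure_union_le _ _
      _ = ℙ {ω | ENNReal.ofReal ε ≤ Cz μ ζ ω * ENNReal.ofReal 6 * Dmod W T (1/(↑n+1)) ω} := by
        rw [h0, zero_add]

end StepBI

/-- Let `W` be a standard Brownian motion and let
`Υ_t = Σ_{i=1}^m ζ_{i−1} 1_{(t_{i−1}, t_i]}(t)`, `t ∈ [0,T]`, be a step process. Then `Υ` is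
backward integrable with respect to `W` in the sense of Russo–Vallois, and its backward integral
coincides with the Hänggi–Klimontovich limit: for every `t ∈ (0, T]`,
`∫_0^t Υ_s d⁺W_s = lim_{‖Δ_n‖→0} Σ_j Υ_{t_j}(W_{t_j} − W_{t_{j−1}})` in probability. -/
theorem step_process_backward_integral_eq_hk_limit
    {Ω : Type*} [MeasureSpace Ω] (W : ℝ → Ω → ℝ) (hW : IsBrownianMotion W)
    (T : ℝ) (hT : 0 < T) (μ : ℕ) (hμ : 0 < μ) (τ : ℕ → ℝ)
    (hτ0 : τ 0 = 0) (hτT : τ μ = T) (hτmono : ∀ i < μ, τ i < τ (i + 1))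
    (ζ : ℕ → Ω → ℝ) (hζ : ∀ i, Measurable (ζ i)) :
    ∃ I : ℝ → Ω → ℝ,
      IsBackwardIntegral T
        (fun s ω => ∑ i ∈ Finset.range μ, if s ∈ Ioc (τ i) (τ (i + 1)) then ζ i ω else 0)
        W I ∧
      ∀ t : ℝ, 0 < t → t ≤ T →
        TendstoInProbMesh 0 t
          (riemannSumRight 0 t
            (fun s ω => ∑ i ∈ Finset.range μ, if s ∈ Ioc (τ i) (τ (i + 1)) then ζ i ω else 0)
            W)
          (I t) := by
  haveI := hW.isProb
  obtain ⟨I, h1, h2⟩ := StepBI.main W hW.isProb hW.measurable hW.contPaths T hT μ hμ τ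
    hτ0 hτT hτmono ζ hζ
  exact ⟨I, h1, fun t ht0 htT => h2 t ht0 htT⟩
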